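/- Let 𝔽 ∈ {ℝ, ℂ}, set β = 1 if 𝔽 = ℝ and β = 2 if 𝔽 = ℂ, let N ≥ 2, and let x = (x₁,…,x_N) be uniformly distributed on the unit sphere of 𝔽^N (identified with the unit sphere of ℝ^{βN}). Then for every t ≥ 0, P{|x₁| ≥ t} ≤ exp(−β(N−1)t²/2). -/

import Mathlib

open MeasureTheory

noncomputable section

variable {𝕜 : Type} [RCLike 𝕜]

noncomputable instance {N : ℕ} : MeasurableSpace (EuclideanSpace 𝕜 (Fin N)) := borel _
instance {N : ℕ} : BorelSpace (EuclideanSpace 𝕜 (Fin N)) := ⟨rfl⟩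

section Aux

open Metric Set
open scoped ENNReal Pointwise

namespace SphereConc

lemma sqrt_add_le {x y : ℝ} (hx : 0 ≤ x) (hy : 0 ≤ y) :
    Real.sqrt (x + y) ≤ Real.sqrt x + Real.sqrt y := by
  have h1 : x + y ≤ (Real.sqrt x + Real.sqrt y) ^ 2 := by
    nlinarith [Real.sq_sqrt hx, Real.sq_sqrt hy, Real.sqrt_nonneg x, Real.sqrt_nonneg y]
  calc Real.sqrt (x + y) ≤ Real.sqrt ((Real.sqrt x + Real.sqrt y) ^ 2) := Real.sqrt_le_sqrt h1
  _ = Real.sqrt x + Real.sqrt y := Real.sqrt_sq (by positivity)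

/-- subadditivity of `√·^β` for `1 ≤ β ≤ 2`. -/
lemma sqrt_pow_add {β : ℕ} (hβ1 : 1 ≤ β) (hβ2 : β ≤ 2) {x y z : ℝ} (hx : 0 ≤ x) (hy : 0 ≤ y)
    (hz : z ≤ x + y) :
    Real.sqrt z ^ β ≤ Real.sqrt x ^ β + Real.sqrt y ^ β := by
  interval_cases β
  · simp only [pow_one]
    exact (Real.sqrt_le_sqrt hz).trans (sqrt_add_le hx hy)
  · rcases le_or_gt z 0 with h | h
    · have : Real.sqrt z = 0 := Real.sqrt_eq_zero_of_nonpos h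
      rw [this, zero_pow two_ne_zero]
      positivity
    · rw [Real.sq_sqrt h.le, Real.sq_sqrt hx, Real.sq_sqrt hy]
      exact hz

variable {F : Type*} [NormedAddCommGroup F] [NormedSpace ℝ F] [FiniteDimensional ℝ F]
  [MeasurableSpace F] [BorelSpace F] [Nontrivial F] (κ : Measure F) [κ.IsAddHaarMeasure]

lemma ball_meas {r : ℝ} (hr : 0 ≤ r) :
    κ (ball 0 r) = ENNReal.ofReal (r ^ Module.finrank ℝ F) * κ (ball 0 1) := by
  rcases hr.lt_or_eq with h | h
  · rw [← smul_unitBall_of_pos h, Measure.addHaar_smul_of_nonneg κ hr]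
  · rw [← h, ball_zero, zero_pow (Module.finrank_pos (R := ℝ) (M := F)).ne']
    simp

lemma cball_meas {r : ℝ} (hr : 0 ≤ r) :
    κ (closedBall 0 r) = ENNReal.ofReal (r ^ Module.finrank ℝ F) * κ (ball 0 1) := by
  rw [← ball_meas κ hr]
  refine le_antisymm ?_ (measure_mono ball_subset_closedBall)
  rw [← ball_union_sphere]
  exact (measure_union_le _ _).trans (by rw [Measure.addHaar_sphere]; simp)


lemma subst_Ioi (h : ℝ → ℝ≥0∞) (hh : Antitone h) {b : ℝ} (hb : 0 < b) :
    ∫⁻ t in Ioi 0, h t = ENNReal.ofReal b * ∫⁻ t in Ioi 0, h (b * t) := by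
  have hm : Measurable h := hh.measurable
  have hmap : Measure.map (fun x : ℝ => b * x) volume = ENNReal.ofReal |b⁻¹| • volume :=
    Real.map_volume_mul_left hb.ne'
  have hpre : (fun x : ℝ => b * x) ⁻¹' (Ioi 0) = Ioi 0 := by
    ext x
    simp only [mem_preimage, mem_Ioi]
    constructor
    · intro hx
      nlinarith
    · intro hx
      positivity
  have h1 : ∫⁻ t in Ioi 0, h t ∂(Measure.map (fun x : ℝ => b * x) volume)
      = ∫⁻ x in Ioi 0, h (b * x) ∂volume := by
    rw [setLIntegral_map measurableSet_Ioi hm (measurable_const_mul b), hpre]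
  rw [hmap] at h1
  rw [Measure.restrict_smul, lintegral_smul_measure] at h1
  have hb' : ENNReal.ofReal b * ENNReal.ofReal |b⁻¹| = 1 := by
    rw [← ENNReal.ofReal_mul hb.le, abs_of_pos (by positivity), mul_inv_cancel₀ hb.ne',
      ENNReal.ofReal_one]
  calc ∫⁻ t in Ioi 0, h t
      = (ENNReal.ofReal b * ENNReal.ofReal |b⁻¹|) * ∫⁻ t in Ioi 0, h t := by rw [hb', one_mul]
    _ = ENNReal.ofReal b * ∫⁻ x in Ioi 0, h (b * x) ∂volume := by rw [mul_assoc, ← h1, smul_eq_mul]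


variable {F : Type*} [NormedAddCommGroup F] [NormedSpace ℝ F] [FiniteDimensional ℝ F]
  [MeasurableSpace F] [BorelSpace F] [Nontrivial F] (κ : Measure F) [κ.IsAddHaarMeasure]

lemma core_ineq (hdim : Module.finrank ℝ F ≤ 2) {s : ℝ} (hs0 : 0 < s) (hs1 : s ≤ 1) {K : ℕ}
    (hK : 1 ≤ K) :
    ∫⁻ a, ENNReal.ofReal
        (Real.sqrt (max 0 (min (1 - ‖a‖ ^ 2) ((1 - s) / s * ‖a‖ ^ 2))) ^ K) ∂κ
      ≤ ENNReal.ofReal (Real.sqrt (1 - s) ^ K) *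
        ∫⁻ a, ENNReal.ofReal (Real.sqrt (max 0 (1 - ‖a‖ ^ 2)) ^ K) ∂κ := by
  have hK0 : K ≠ 0 := by omega
  rcases eq_or_lt_of_le hs1 with hs1' | hs1'
  · -- s = 1 : left integrand is identically zero
    subst hs1'
    have hz : ∀ a : F, Real.sqrt (max 0 (min (1 - ‖a‖ ^ 2) ((1 - 1) / 1 * ‖a‖ ^ 2))) ^ K = 0 := by
      intro a
      have h0 : (1 - (1:ℝ)) / 1 * ‖a‖ ^ 2 = 0 := by norm_num
      rw [h0, max_eq_left (min_le_right _ _), Real.sqrt_zero, zero_pow hK0]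
    simp only [hz, ENNReal.ofReal_zero, lintegral_zero]
    exact zero_le
  · -- main case : s < 1
    set β := Module.finrank ℝ F with hβ
    have hβ1 : 1 ≤ β := Module.finrank_pos
    set f₁ : F → ℝ := fun a =>
      Real.sqrt (max 0 (min (1 - ‖a‖ ^ 2) ((1 - s) / s * ‖a‖ ^ 2))) ^ K with hf₁
    set f₂ : F → ℝ := fun a => Real.sqrt (max 0 (1 - ‖a‖ ^ 2)) ^ K with hf₂
    have hc₁ : Continuous f₁ := by fun_prop
    have hc₂ : Continuous f₂ := by fun_prop
    have hnn₁ : (0:F → ℝ) ≤ f₁ := fun a => by positivity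
    have hnn₂ : (0:F → ℝ) ≤ f₂ := fun a => by positivity
    rw [lintegral_eq_lintegral_meas_lt κ (Filter.Eventually.of_forall hnn₁)
      hc₁.measurable.aemeasurable,
      lintegral_eq_lintegral_meas_lt κ (Filter.Eventually.of_forall hnn₂)
      hc₂.measurable.aemeasurable]
    have hb : (0:ℝ) < Real.sqrt (1 - s) ^ K := by
      apply pow_pos
      exact Real.sqrt_pos.2 (by linarith)
    have hanti : Antitone fun t : ℝ => κ {a | t < f₁ a} := by
      intro t u htu
      exact measure_mono fun a ha => lt_of_le_of_lt htu ha
    rw [subst_Ioi (fun t => κ {a | t < f₁ a}) hanti hb]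
    apply mul_le_mul_right ?_ _
    apply lintegral_mono_ae
    filter_upwards [ae_restrict_mem measurableSet_Ioi] with t ht
    -- key pointwise superlevel inequality
    set τ : ℝ := t ^ ((K:ℝ))⁻¹ with hτdef
    have hτ : 0 < τ := Real.rpow_pos_of_pos ht _
    have hτK : τ ^ K = t := by
      rw [hτdef, ← Real.rpow_natCast (t ^ ((K:ℝ))⁻¹) K, ← Real.rpow_mul (le_of_lt ht),
        inv_mul_cancel₀ (by exact_mod_cast hK0), Real.rpow_one]
    set ρ : ℝ := Real.sqrt (max 0 (1 - τ ^ 2)) with hρ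
    set ρ₂ : ℝ := Real.sqrt (max 0 (1 - (1 - s) * τ ^ 2)) with hρ₂
    set ρ₁ : ℝ := Real.sqrt s * τ with hρ₁
    have hset2 : {a : F | t < f₂ a} = ball (0:F) ρ := by
      ext a
      simp only [mem_setOf_eq, mem_ball_zero_iff, hf₂]
      rw [← hτK]
      rw [pow_lt_pow_iff_left₀ hτ.le (Real.sqrt_nonneg _) hK0,
        Real.lt_sqrt hτ.le, hρ, Real.lt_sqrt (norm_nonneg a)]
      rw [lt_max_iff, lt_max_iff]
      have h1 : ¬ (τ ^ 2 < 0) := not_lt.2 (by positivity)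
      have h2 : ¬ (‖a‖ ^ 2 < 0) := not_lt.2 (by positivity)
      simp only [h1, h2, false_or]
      constructor <;> intro <;> linarith
    have hset1 : {a : F | Real.sqrt (1 - s) ^ K * t < f₁ a}
        = ball (0:F) ρ₂ \ closedBall 0 ρ₁ := by
      ext a
      simp only [mem_setOf_eq, mem_diff, mem_ball_zero_iff, mem_closedBall_zero_iff, not_le, hf₁]
      have hbt : Real.sqrt (1 - s) ^ K * t = (Real.sqrt (1 - s) * τ) ^ K := by
        rw [mul_pow, hτK]
      rw [hbt, pow_lt_pow_iff_left₀ (by positivity) (Real.sqrt_nonneg _) hK0,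
        Real.lt_sqrt (by positivity)]
      have hsq : (Real.sqrt (1 - s) * τ) ^ 2 = (1 - s) * τ ^ 2 := by
        rw [mul_pow, Real.sq_sqrt (by linarith : (0:ℝ) ≤ 1 - s)]
      rw [hsq, lt_max_iff]
      have h1 : ¬ ((1 - s) * τ ^ 2 < 0) := by
        have : 0 < (1 - s) * τ ^ 2 := by
          apply mul_pos (by linarith) (by positivity)
        linarith
      simp only [h1, false_or, lt_min_iff]
      have e1 : (1 - s) * τ ^ 2 < 1 - ‖a‖ ^ 2 ↔ ‖a‖ < ρ₂ := by
        rw [hρ₂, Real.lt_sqrt (norm_nonneg a), lt_max_iff]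
        have : ¬ (‖a‖ ^ 2 < 0) := not_lt.2 (by positivity)
        simp only [this, false_or]
        constructor <;> intro <;> linarith
      have e2 : (1 - s) * τ ^ 2 < (1 - s) / s * ‖a‖ ^ 2 ↔ ρ₁ < ‖a‖ := by
        have h1s : (0:ℝ) < 1 - s := by linarith
        rw [div_mul_eq_mul_div, lt_div_iff₀ hs0, mul_comm ((1-s) * τ ^ 2) s,
          ← mul_assoc, mul_comm s (1 - s), mul_assoc, mul_lt_mul_iff_of_pos_left h1s]
        rw [show s * τ ^ 2 = ρ₁ ^ 2 by
          rw [hρ₁, mul_pow, Real.sq_sqrt hs0.le]]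
        rw [pow_lt_pow_iff_left₀ (by positivity) (norm_nonneg a) (two_ne_zero)]
      rw [e1, e2]
    rw [hset1, hset2]
    rcases le_or_gt ρ₂ ρ₁ with hle | hlt
    · have : ball (0:F) ρ₂ \ closedBall 0 ρ₁ = ∅ := by
        apply diff_eq_empty.2
        exact ball_subset_closedBall.trans (closedBall_subset_closedBall hle)
      rw [this]
      simp
    · have hsub : closedBall (0:F) ρ₁ ⊆ ball (0:F) ρ₂ := closedBall_subset_ball hlt
      have hfin : κ (closedBall (0:F) ρ₁) ≠ ∞ := (isCompact_closedBall _ _).measure_lt_top.ne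
      have hκsum : κ (ball (0:F) ρ₂ \ closedBall 0 ρ₁) + κ (closedBall 0 ρ₁) = κ (ball (0:F) ρ₂) := by
        rw [← measure_union disjoint_sdiff_left measurableSet_closedBall,
          diff_union_of_subset hsub]
      have hnum : ρ₂ ^ β ≤ ρ ^ β + ρ₁ ^ β := by
        have hρ₁' : ρ₁ ^ β = Real.sqrt (s * τ ^ 2) ^ β := by
          rw [Real.sqrt_mul hs0.le, Real.sqrt_sq hτ.le]
        rw [hρ₁', hρ, hρ₂]
        refine sqrt_pow_add hβ1 hdim (le_max_left _ _) (by positivity) ?_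
        have h := le_max_right (0:ℝ) (1 - τ ^ 2)
        refine max_le (by positivity) (by linarith)
      have hball : κ (ball (0:F) ρ₂) ≤ κ (ball (0:F) ρ) + κ (closedBall 0 ρ₁) := by
        rw [ball_meas κ (Real.sqrt_nonneg _), ball_meas κ (Real.sqrt_nonneg _),
          cball_meas κ (by positivity)]
        rw [← add_mul]
        apply mul_le_mul_left
        rw [← ENNReal.ofReal_add (by positivity) (by positivity)]
        exact ENNReal.ofReal_le_ofReal hnum
      have := hκsum.trans_le hball
      rwa [ENNReal.add_le_add_iff_right hfin] at this


variable {𝕜 : Type} [RCLike 𝕜]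

lemma rclike_finrank_le_two (𝕜 : Type) [RCLike 𝕜] : Module.finrank ℝ 𝕜 ≤ 2 := by
  classical
  have hspan : Submodule.span ℝ ({1, RCLike.I} : Set 𝕜) = ⊤ := by
    rw [Submodule.eq_top_iff']
    intro z
    refine Submodule.mem_span_pair.2 ⟨RCLike.re z, RCLike.im z, ?_⟩
    simp [RCLike.real_smul_eq_coe_mul]
  have h1 : Module.finrank ℝ 𝕜 = Module.finrank ℝ (Submodule.span ℝ ({1, RCLike.I} : Set 𝕜)) := by
    rw [hspan, finrank_top]
  rw [h1]
  have h2 : ({1, RCLike.I} : Set 𝕜) = (↑({1, RCLike.I} : Finset 𝕜) : Set 𝕜) := by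
    simp
  rw [h2]
  exact (finrank_span_finset_le_card _).trans
    ((Finset.card_insert_le _ _).trans (by simp))

lemma coord_le_norm {N : ℕ} (w : EuclideanSpace 𝕜 (Fin N)) (i : Fin N) : ‖w i‖ ≤ ‖w‖ := by
  rw [EuclideanSpace.norm_eq]
  have h1 : ‖w i‖ ^ 2 ≤ ∑ j, ‖w j‖ ^ 2 :=
    Finset.single_le_sum (f := fun j => ‖w j‖ ^ 2) (fun j _ => sq_nonneg _)
      (Finset.mem_univ i)
  have h2 := Real.sqrt_le_sqrt h1
  rwa [Real.sqrt_sq (norm_nonneg _)] at h2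

lemma exists_iso {N : ℕ} {u : EuclideanSpace 𝕜 (Fin N)} (hu : ‖u‖ = 1) (i₀ : Fin N) :
    ∃ h : EuclideanSpace 𝕜 (Fin N) ≃ₗᵢ[𝕜] EuclideanSpace 𝕜 (Fin N),
      h u = EuclideanSpace.single i₀ 1 := by
  classical
  have horth : Orthonormal 𝕜 (({i₀} : Set (Fin N)).restrict (fun _ => u)) := by
    constructor
    · intro i
      exact hu
    · intro i j hij
      exact absurd (Subsingleton.elim i j) hij
  obtain ⟨b, hb⟩ := horth.exists_orthonormalBasis_extension_of_card_eq
    (by simp [finrank_euclideanSpace_fin])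
  refine ⟨b.repr, ?_⟩
  have h1 : b i₀ = u := hb i₀ (mem_singleton _)
  rw [← h1, OrthonormalBasis.repr_self]


lemma sec_meas {𝕜 : Type} [RCLike 𝕜] [MeasurableSpace 𝕜] [BorelSpace 𝕜] {M : ℕ} (hM : 1 ≤ M)
    (η : Measure (Fin M → 𝕜)) [η.IsAddHaarMeasure] (R : ℝ) :
    η {v : Fin M → 𝕜 | ∑ i, ‖v i‖ ^ 2 ≤ R}
      = ENNReal.ofReal (Real.sqrt (max 0 R) ^ Module.finrank ℝ (Fin M → 𝕜)) *
        η {v : Fin M → 𝕜 | ∑ i, ‖v i‖ ^ 2 ≤ 1} := by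
  haveI : Nontrivial (Fin M → 𝕜) := by
    refine ⟨0, fun _ => 1, fun h => ?_⟩
    have := congrFun h ⟨0, hM⟩
    simp at this
  have hK0 : Module.finrank ℝ (Fin M → 𝕜) ≠ 0 := Module.finrank_pos.ne'
  have hQ : ∀ v : Fin M → 𝕜, 0 ≤ ∑ i, ‖v i‖ ^ 2 :=
    fun v => Finset.sum_nonneg fun i _ => sq_nonneg _
  rcases le_or_gt R 0 with hR | hR
  · have hsub : {v : Fin M → 𝕜 | ∑ i, ‖v i‖ ^ 2 ≤ R} ⊆ {0} := by
      intro v hv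
      have h0 : ∑ i, ‖v i‖ ^ 2 = 0 := le_antisymm (hv.trans hR) (hQ v)
      rw [Finset.sum_eq_zero_iff_of_nonneg (fun i _ => sq_nonneg _)] at h0
      have : v = 0 := by
        funext i
        have := h0 i (Finset.mem_univ i)
        have hvi : ‖v i‖ = 0 := by
          nlinarith [norm_nonneg (v i)]
        exact norm_eq_zero.1 hvi
      simp [this]
    have h1 : η {v : Fin M → 𝕜 | ∑ i, ‖v i‖ ^ 2 ≤ R} = 0 :=
      measure_mono_null hsub (measure_singleton 0)
    rw [h1, max_eq_left hR, Real.sqrt_zero, zero_pow hK0, ENNReal.ofReal_zero, zero_mul]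
  · have hmax : max 0 R = R := max_eq_right hR.le
    have hsR : (0:ℝ) < Real.sqrt R := Real.sqrt_pos.2 hR
    have hset : {v : Fin M → 𝕜 | ∑ i, ‖v i‖ ^ 2 ≤ R}
        = Real.sqrt R • {v : Fin M → 𝕜 | ∑ i, ‖v i‖ ^ 2 ≤ 1} := by
      ext v
      rw [mem_smul_set_iff_inv_smul_mem₀ hsR.ne']
      simp only [mem_setOf_eq]
      have hterm : ∀ i, ‖((Real.sqrt R)⁻¹ • v) i‖ ^ 2 = ((Real.sqrt R)^2)⁻¹ * ‖v i‖ ^ 2 := by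
        intro i
        rw [Pi.smul_apply, norm_smul, Real.norm_eq_abs, abs_of_pos (by positivity), mul_pow,
          inv_pow]
      rw [Finset.sum_congr rfl (fun i _ => hterm i), ← Finset.mul_sum]
      rw [inv_mul_le_iff₀ (by positivity), mul_one, Real.sq_sqrt hR.le]
    rw [hset, Measure.addHaar_smul_of_nonneg η (Real.sqrt_nonneg R), hmax]


def pl (𝕜 : Type) [RCLike 𝕜] (M : ℕ) : (Fin (M+1) → 𝕜) ≃ₗ[𝕜] 𝕜 × (Fin M → 𝕜) where
  toFun w := (w 0, fun i => w i.succ)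
  invFun p := Fin.cons p.1 p.2
  map_add' _ _ := rfl
  map_smul' _ _ := rfl
  left_inv w := Fin.cons_self_tail w
  right_inv p := by
    refine Prod.ext ?_ ?_ <;> simp

def Psi (𝕜 : Type) [RCLike 𝕜] (M : ℕ) :
    (𝕜 × (Fin M → 𝕜)) ≃ₗ[𝕜] EuclideanSpace 𝕜 (Fin (M+1)) :=
  (pl 𝕜 M).symm ≪≫ₗ (WithLp.linearEquiv 2 𝕜 (Fin (M+1) → 𝕜)).symm

def PsiL (𝕜 : Type) [RCLike 𝕜] (M : ℕ) :
    (𝕜 × (Fin M → 𝕜)) ≃L[𝕜] EuclideanSpace 𝕜 (Fin (M+1)) :=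
  (Psi 𝕜 M).toContinuousLinearEquiv

end SphereConc

open SphereConc in
set_option maxHeartbeats 2000000 in
/-- Lemma 2 of the paper; concentration of measure on spheres: if `x` is
uniformly distributed on the unit sphere of `𝔽^N` (with `𝔽 ∈ {ℝ, ℂ}` and `β = dim_ℝ 𝔽`,
uniformity being characterised by invariance under all linear isometries), then
`ℙ(|x₁| ≥ t) ≤ exp(-β(N-1)t²/2)` for all `t ≥ 0`. -/
theorem sphere_first_coordinate_concentration
    {𝕜 : Type} [RCLike 𝕜] {N : ℕ} (hN : 2 ≤ N)
    {Ω : Type} [MeasurableSpace Ω] (ℙ : Measure Ω) [IsProbabilityMeasure ℙ]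
    (x : Ω → EuclideanSpace 𝕜 (Fin N)) (hmeas : Measurable x)
    (hsphere : ∀ ω, ‖x ω‖ = 1)
    (hinv : ∀ g : EuclideanSpace 𝕜 (Fin N) ≃ₗᵢ[𝕜] EuclideanSpace 𝕜 (Fin N),
      Measure.map (fun ω => g (x ω)) ℙ = Measure.map x ℙ)
    (t : ℝ) (ht : 0 ≤ t) :
    ℙ {ω | t ≤ ‖x ω (⟨0, by omega⟩ : Fin N)‖} ≤
      ENNReal.ofReal (Real.exp (-(Module.finrank ℝ 𝕜 : ℝ) * ((N : ℝ) - 1) * t ^ 2 / 2)) := by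
  classical
  borelize 𝕜
  obtain ⟨M, rfl⟩ : ∃ M, N = M + 1 := ⟨N - 1, by omega⟩
  have hM : 1 ≤ M := by omega
  suffices H : ∀ i₀ : Fin (M + 1), ℙ {ω | t ≤ ‖x ω i₀‖} ≤
      ENNReal.ofReal (Real.exp (-(Module.finrank ℝ 𝕜 : ℝ) * (((M+1 : ℕ) : ℝ) - 1) * t ^ 2 / 2))
    from H _
  intro i₀
  set β := Module.finrank ℝ 𝕜 with hβdef
  have hβ1 : 1 ≤ β := Module.finrank_pos
  have hβ2 : β ≤ 2 := rclike_finrank_le_two 𝕜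
  -- trivial case t = 0
  rcases eq_or_lt_of_le ht with ht0 | ht0
  · rw [← ht0]
    have he : ENNReal.ofReal
        (Real.exp (-(β : ℝ) * (((M+1 : ℕ) : ℝ) - 1) * (0:ℝ) ^ 2 / 2)) = 1 := by
      norm_num
    rw [he]
    exact prob_le_one
  -- trivial case t > 1
  rcases le_or_gt t 1 with ht1 | ht1
  swap
  · have hempty : {ω | t ≤ ‖x ω i₀‖} = ∅ := by
      rw [eq_empty_iff_forall_notMem]
      intro ω hω
      have h1 : ‖x ω i₀‖ ≤ 1 := by
        have := coord_le_norm (x ω) i₀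
        rw [hsphere ω] at this
        exact this
      simp only [mem_setOf_eq] at hω
      linarith
    rw [hempty]
    simp
  -- main case : 0 < t ≤ 1
  have hs0 : (0:ℝ) < t ^ 2 := by positivity
  have hs1 : t ^ 2 ≤ 1 := by nlinarith
  haveI : ProperSpace 𝕜 := FiniteDimensional.proper_rclike 𝕜 𝕜
  haveI : ProperSpace (EuclideanSpace 𝕜 (Fin (M+1))) := FiniteDimensional.proper_rclike 𝕜 _
  haveI : SecondCountableTopology (EuclideanSpace 𝕜 (Fin (M+1))) := secondCountable_of_proper
  haveI : SecondCountableTopology 𝕜 := secondCountable_of_proper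
  haveI : Nontrivial (EuclideanSpace 𝕜 (Fin (M+1))) := by
    refine ⟨EuclideanSpace.single i₀ 1, 0, fun h => ?_⟩
    have h1 := congrArg (fun v : EuclideanSpace 𝕜 (Fin (M+1)) => v i₀) h
    rw [EuclideanSpace.single_apply] at h1
    simp at h1
  haveI : Nontrivial (Fin M → 𝕜) := by
    refine ⟨0, fun _ => 1, fun h => ?_⟩
    have := congrFun h ⟨0, hM⟩
    simp at this
  -- the pushforward measure
  set μ := Measure.map x ℙ with hμdef
  haveI : IsProbabilityMeasure μ := Measure.isProbabilityMeasure_map hmeas.aemeasurable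
  have hμpre : ∀ (g : EuclideanSpace 𝕜 (Fin (M+1)) ≃ₗᵢ[𝕜] EuclideanSpace 𝕜 (Fin (M+1)))
      (S : Set (EuclideanSpace 𝕜 (Fin (M+1)))), MeasurableSet S → μ (⇑g ⁻¹' S) = μ S := by
    intro g S hS
    have h1 : Measure.map (⇑g) μ = μ := by
      rw [hμdef, Measure.map_map g.continuous.measurable hmeas]
      exact hinv g
    conv_rhs => rw [← h1]
    rw [Measure.map_apply g.continuous.measurable hS]
  -- Haar measures
  set κ : Measure 𝕜 := (Module.finBasis ℝ 𝕜).addHaar with hκdef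
  set η : Measure (Fin M → 𝕜) := (Module.finBasis ℝ (Fin M → 𝕜)).addHaar with hηdef
  haveI : (κ.prod η).IsAddHaarMeasure := {}
  set ν : Measure (EuclideanSpace 𝕜 (Fin (M+1))) := Measure.map (⇑(PsiL 𝕜 M)) (κ.prod η)
    with hνdef
  haveI hνHaar : ν.IsAddHaarMeasure := (PsiL 𝕜 M).isAddHaarMeasure_map (κ.prod η)
  -- basic sets
  have hcont0 : ∀ j : Fin (M+1), Continuous (fun w : EuclideanSpace 𝕜 (Fin (M+1)) => w j) :=
    fun j => (continuous_apply j).comp (PiLp.continuousLinearEquiv 2 𝕜 _).continuous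
  set D := {z : EuclideanSpace 𝕜 (Fin (M+1)) | t ≤ ‖z i₀‖} with hDdef
  have hDmeas : MeasurableSet D := (isClosed_le continuous_const (hcont0 i₀).norm).measurableSet
  set C := {w : EuclideanSpace 𝕜 (Fin (M+1)) | t * ‖w‖ ≤ ‖w 0‖} with hCdef
  have hCmeas : MeasurableSet C :=
    (isClosed_le (continuous_const.mul continuous_norm) (hcont0 0).norm).measurableSet
  set B := closedBall (0 : EuclideanSpace 𝕜 (Fin (M+1))) 1 with hBdef
  have hBmeas : MeasurableSet B := measurableSet_closedBall
  have hνB0 : ν B ≠ 0 :=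
    ((measure_ball_pos ν 0 one_pos).trans_le (measure_mono ball_subset_closedBall)).ne'
  have hνBfin : ν B ≠ ⊤ := ((isCompact_closedBall (0:EuclideanSpace 𝕜 (Fin (M+1))) 1).measure_lt_top).ne
  have hBpre : ∀ g : EuclideanSpace 𝕜 (Fin (M+1)) ≃ₗᵢ[𝕜] EuclideanSpace 𝕜 (Fin (M+1)),
      ⇑g ⁻¹' B = B := by
    intro g
    ext z
    simp only [hBdef, mem_preimage, mem_closedBall_zero_iff, g.norm_map]
  -- invariance of ν under linear isometries
  have hνinv : ∀ (g : EuclideanSpace 𝕜 (Fin (M+1)) ≃ₗᵢ[𝕜] EuclideanSpace 𝕜 (Fin (M+1)))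
      (S : Set (EuclideanSpace 𝕜 (Fin (M+1)))), ν (⇑g ⁻¹' S) = ν S := by
    have key : ∀ (g : EuclideanSpace 𝕜 (Fin (M+1)) ≃ₗᵢ[𝕜] EuclideanSpace 𝕜 (Fin (M+1)))
        (S : Set (EuclideanSpace 𝕜 (Fin (M+1)))), ν (⇑g '' S) = ν S := by
      intro g S
      set f : EuclideanSpace 𝕜 (Fin (M+1)) →ₗ[ℝ] EuclideanSpace 𝕜 (Fin (M+1)) :=
        ((g.toLinearEquiv).restrictScalars ℝ :
          EuclideanSpace 𝕜 (Fin (M+1)) ≃ₗ[ℝ] EuclideanSpace 𝕜 (Fin (M+1))).toLinearMap with hf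
      have hcoe : ⇑f = ⇑g := rfl
      have him : ∀ T : Set (EuclideanSpace 𝕜 (Fin (M+1))),
          ν (⇑g '' T) = ENNReal.ofReal |LinearMap.det f| * ν T := by
        intro T
        rw [← hcoe]
        exact Measure.addHaar_image_linearMap ν f T
      have hgB : ⇑g '' B = B := by
        ext z
        constructor
        · rintro ⟨u, hu, rfl⟩
          rw [hBdef, mem_closedBall_zero_iff, g.norm_map]
          rwa [hBdef, mem_closedBall_zero_iff] at hu
        · intro hz
          refine ⟨g.symm z, ?_, g.apply_symm_apply z⟩
          rw [hBdef, mem_closedBall_zero_iff, g.symm.norm_map]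
          rwa [hBdef, mem_closedBall_zero_iff] at hz
      have h1 : ENNReal.ofReal |LinearMap.det f| * ν B = ν B := by
        rw [← him B, hgB]
      have hc : ENNReal.ofReal |LinearMap.det f| = 1 := by
        calc ENNReal.ofReal |LinearMap.det f|
            = ENNReal.ofReal |LinearMap.det f| * (ν B * (ν B)⁻¹) := by
              rw [ENNReal.mul_inv_cancel hνB0 hνBfin, mul_one]
          _ = ENNReal.ofReal |LinearMap.det f| * ν B * (ν B)⁻¹ := by rw [mul_assoc]
          _ = ν B * (ν B)⁻¹ := by rw [h1]
          _ = 1 := ENNReal.mul_inv_cancel hνB0 hνBfin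
      rw [him S, hc, one_mul]
    intro g S
    have hpre : ⇑g ⁻¹' S = ⇑g.symm '' S := by
      ext z
      simp only [mem_preimage]
      constructor
      · intro hz
        exact ⟨g z, hz, g.symm_apply_apply z⟩
      · rintro ⟨u, hu, rfl⟩
        rwa [g.apply_symm_apply]
    rw [hpre, key g.symm S]
  -- the restricted measure and the Fubini set
  set ν' := ν.restrict B with hν'def
  haveI : IsFiniteMeasure ν' := by
    constructor
    rw [hν'def, Measure.restrict_apply_univ]
    exact lt_top_iff_ne_top.2 hνBfin
  set A : Set (EuclideanSpace 𝕜 (Fin (M+1)) × EuclideanSpace 𝕜 (Fin (M+1))) :=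
    {p | t * ‖p.2‖ ≤ ‖(inner 𝕜 p.2 p.1)‖} with hAdef
  have hinnercont : Continuous (fun p : EuclideanSpace 𝕜 (Fin (M+1)) ×
      EuclideanSpace 𝕜 (Fin (M+1)) => (inner 𝕜 p.2 p.1)) :=
    continuous_inner.comp (continuous_snd.prodMk continuous_fst)
  have hAmeas : MeasurableSet A :=
    (isClosed_le (continuous_const.mul continuous_snd.norm) hinnercont.norm).measurableSet
  have hsph_meas : MeasurableSet {y : EuclideanSpace 𝕜 (Fin (M+1)) | ‖y‖ = 1} :=
    (isClosed_eq continuous_norm continuous_const).measurableSet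
  have hae : ∀ᵐ y ∂μ, ‖y‖ = 1 := by
    rw [hμdef, ae_map_iff hmeas.aemeasurable hsph_meas]
    exact Filter.Eventually.of_forall hsphere
  -- Fubini, first order
  have compute1 : (μ.prod ν') A = ν (C ∩ B) := by
    rw [Measure.prod_apply hAmeas]
    have hsec : ∀ y : EuclideanSpace 𝕜 (Fin (M+1)), ‖y‖ = 1 →
        ν' (Prod.mk y ⁻¹' A) = ν (C ∩ B) := by
      intro y hy
      obtain ⟨h, hh⟩ := exists_iso hy 0
      have hseteq : Prod.mk y ⁻¹' A = ⇑h ⁻¹' C := by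
        ext w
        simp only [hAdef, hCdef, mem_preimage, mem_setOf_eq]
        rw [← h.inner_map_map w y, hh, EuclideanSpace.inner_single_right, one_mul,
          RCLike.norm_conj, ← h.norm_map w]
      rw [hseteq, hν'def, Measure.restrict_apply (hCmeas.preimage h.continuous.measurable),
        show ⇑h ⁻¹' C ∩ B = ⇑h ⁻¹' (C ∩ B) by rw [preimage_inter, hBpre h]]
      exact hνinv h (C ∩ B)
    calc ∫⁻ y, ν' (Prod.mk y ⁻¹' A) ∂μ
        = ∫⁻ _, ν (C ∩ B) ∂μ := by
          apply lintegral_congr_ae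
          filter_upwards [hae] with y hy
          exact hsec y hy
      _ = ν (C ∩ B) := by rw [lintegral_const, measure_univ, mul_one]
  -- Fubini, second order
  have hae0 : ∀ᵐ w ∂ν', w ≠ 0 := by
    rw [ae_iff]
    have hset : {w : EuclideanSpace 𝕜 (Fin (M+1)) | ¬ w ≠ 0} = {0} := by
      ext w; simp
    rw [hset, hν'def, Measure.restrict_apply (measurableSet_singleton 0)]
    exact measure_mono_null inter_subset_left (measure_singleton 0)
  have compute2 : (μ.prod ν') A = μ D * ν B := by
    rw [Measure.prod_apply_symm hAmeas]
    have hsec : ∀ w : EuclideanSpace 𝕜 (Fin (M+1)), w ≠ 0 →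
        μ ((fun y => (y, w)) ⁻¹' A) = μ D := by
      intro w hw
      have hnw : (0:ℝ) < ‖w‖ := norm_pos_iff.2 hw
      set u : EuclideanSpace 𝕜 (Fin (M+1)) := ((‖w‖ : ℝ) : 𝕜)⁻¹ • w with hudef
      have hu : ‖u‖ = 1 := by
        rw [hudef, norm_smul, norm_inv, RCLike.norm_ofReal, abs_of_pos hnw,
          inv_mul_cancel₀ hnw.ne']
      obtain ⟨h, hh⟩ := exists_iso hu i₀
      have hwu : w = ((‖w‖ : ℝ) : 𝕜) • u := by
        rw [hudef, smul_smul, mul_inv_cancel₀ (by exact_mod_cast hnw.ne'), one_smul]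
      have hseteq : (fun y => (y, w)) ⁻¹' A = ⇑h ⁻¹' D := by
        ext y
        simp only [hAdef, hDdef, mem_preimage, mem_setOf_eq]
        have hinner : ‖(inner 𝕜 w y)‖ = ‖w‖ * ‖(h y) i₀‖ := by
          conv_lhs => rw [hwu]
          rw [inner_smul_left, ← h.inner_map_map u y, hh, EuclideanSpace.inner_single_left,
            map_one, one_mul, norm_mul, RCLike.norm_conj, RCLike.norm_ofReal, abs_of_pos hnw]
        rw [hinner, mul_comm t ‖w‖]
        exact mul_le_mul_iff_of_pos_left hnw
      rw [hseteq]
      exact hμpre h D hDmeas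
    calc ∫⁻ w, μ ((fun y => (y, w)) ⁻¹' A) ∂ν'
        = ∫⁻ _, μ D ∂ν' := by
          apply lintegral_congr_ae
          filter_upwards [hae0] with w hw
          exact hsec w hw
      _ = μ D * ν B := by rw [lintegral_const, hν'def, Measure.restrict_apply_univ]
  -- coordinates of PsiL
  have hfun : ∀ (p : 𝕜 × (Fin M → 𝕜)) (i : Fin (M+1)),
      (PsiL 𝕜 M) p i = Fin.cons (α := fun _ => 𝕜) p.1 p.2 i := fun p i => rfl
  have hcoord : ∀ p : 𝕜 × (Fin M → 𝕜), (PsiL 𝕜 M) p 0 = p.1 := by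
    intro p
    rw [hfun]
    exact Fin.cons_zero _ _
  have hnormPsi : ∀ p : 𝕜 × (Fin M → 𝕜),
      ‖(PsiL 𝕜 M) p‖ ^ 2 = ‖p.1‖ ^ 2 + ∑ i, ‖p.2 i‖ ^ 2 := by
    intro p
    rw [EuclideanSpace.norm_eq, Real.sq_sqrt (Finset.sum_nonneg fun i _ => sq_nonneg _),
      Fin.sum_univ_succ]
    have es : ∑ i : Fin M, ‖(PsiL 𝕜 M) p i.succ‖ ^ 2 = ∑ i, ‖p.2 i‖ ^ 2 :=
      Finset.sum_congr rfl fun i _ => by rw [hfun, Fin.cons_succ]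
    rw [hcoord, es]
  set K := Module.finrank ℝ (Fin M → 𝕜) with hKdef
  have hK1 : 1 ≤ K := Module.finrank_pos
  have hKnat : K = M * β := by
    rw [hKdef, Module.finrank_pi_fintype ℝ, ← hβdef]
    simp [Finset.sum_const, Finset.card_univ]
  have hKval : (K:ℝ) = (M:ℝ) * (β:ℝ) := by
    rw [hKnat]
    push_cast
    ring
  -- sections of the product measure
  have hν_apply : ∀ S : Set (EuclideanSpace 𝕜 (Fin (M+1))), MeasurableSet S →
      ν S = (κ.prod η) (⇑(PsiL 𝕜 M) ⁻¹' S) := by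
    intro S hS
    rw [hνdef, Measure.map_apply (PsiL 𝕜 M).continuous.measurable hS]
  have hsection1 : ∀ a : 𝕜, Prod.mk a ⁻¹' (⇑(PsiL 𝕜 M) ⁻¹' (C ∩ B))
      = {v : Fin M → 𝕜 | ∑ i, ‖v i‖ ^ 2 ≤ min (1 - ‖a‖ ^ 2) ((1 - t ^ 2) / t ^ 2 * ‖a‖ ^ 2)} := by
    intro a
    ext v
    simp only [mem_preimage, mem_inter_iff, hCdef, hBdef, mem_setOf_eq,
      mem_closedBall_zero_iff, le_min_iff]
    set w := (PsiL 𝕜 M) (a, v) with hwdef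
    have hw0 : w 0 = a := hcoord (a, v)
    have hw2 : ‖w‖ ^ 2 = ‖a‖ ^ 2 + ∑ i, ‖v i‖ ^ 2 := hnormPsi (a, v)
    have hwnn : (0:ℝ) ≤ ‖w‖ := norm_nonneg w
    constructor
    · rintro ⟨h1, h2⟩
      rw [hw0] at h1
      have hsq1 : t ^ 2 * ‖w‖ ^ 2 ≤ ‖a‖ ^ 2 := by
        have h4 := pow_le_pow_left₀ (by positivity : (0:ℝ) ≤ t * ‖w‖) h1 2
        rw [mul_pow] at h4
        exact h4
      have hsq2 : ‖w‖ ^ 2 ≤ 1 := by nlinarith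
      constructor
      · nlinarith
      · rw [div_mul_eq_mul_div, le_div_iff₀ hs0]
        nlinarith
    · rintro ⟨h1, h2⟩
      rw [div_mul_eq_mul_div, le_div_iff₀ hs0] at h2
      have hsq2 : ‖w‖ ^ 2 ≤ 1 := by nlinarith
      have hsq1 : t ^ 2 * ‖w‖ ^ 2 ≤ ‖a‖ ^ 2 := by nlinarith
      constructor
      · rw [hw0]
        have h3 : (t * ‖w‖) ^ 2 ≤ ‖a‖ ^ 2 := by
          rw [mul_pow]
          exact hsq1
        exact (pow_le_pow_iff_left₀ (by positivity) (norm_nonneg a) two_ne_zero).1 h3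
      · have h3 : ‖w‖ ^ 2 ≤ 1 ^ 2 := by nlinarith
        exact (pow_le_pow_iff_left₀ hwnn zero_le_one two_ne_zero).1 h3
  have hsection2 : ∀ a : 𝕜, Prod.mk a ⁻¹' (⇑(PsiL 𝕜 M) ⁻¹' B)
      = {v : Fin M → 𝕜 | ∑ i, ‖v i‖ ^ 2 ≤ 1 - ‖a‖ ^ 2} := by
    intro a
    ext v
    simp only [mem_preimage, hBdef, mem_setOf_eq, mem_closedBall_zero_iff]
    set w := (PsiL 𝕜 M) (a, v) with hwdef
    have hw2 : ‖w‖ ^ 2 = ‖a‖ ^ 2 + ∑ i, ‖v i‖ ^ 2 := hnormPsi (a, v)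
    have hwnn : (0:ℝ) ≤ ‖w‖ := norm_nonneg w
    constructor
    · intro h2
      nlinarith
    · intro h2
      have h3 : ‖w‖ ^ 2 ≤ 1 ^ 2 := by nlinarith
      exact (pow_le_pow_iff_left₀ hwnn zero_le_one two_ne_zero).1 h3
  have hmint : Measurable (fun a : 𝕜 => ENNReal.ofReal
      (Real.sqrt (max 0 (min (1 - ‖a‖ ^ 2) ((1 - t ^ 2) / t ^ 2 * ‖a‖ ^ 2))) ^ K)) :=
    ENNReal.measurable_ofReal.comp (Continuous.measurable (by fun_prop))
  have hmint2 : Measurable (fun a : 𝕜 => ENNReal.ofReal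
      (Real.sqrt (max 0 (1 - ‖a‖ ^ 2)) ^ K)) :=
    ENNReal.measurable_ofReal.comp (Continuous.measurable (by fun_prop))
  have hI1 : ν (C ∩ B) = (∫⁻ a : 𝕜, ENNReal.ofReal
      (Real.sqrt (max 0 (min (1 - ‖a‖ ^ 2) ((1 - t ^ 2) / t ^ 2 * ‖a‖ ^ 2))) ^ K) ∂κ)
      * η {v : Fin M → 𝕜 | ∑ i, ‖v i‖ ^ 2 ≤ 1} := by
    rw [hν_apply _ (hCmeas.inter hBmeas),
      Measure.prod_apply (((PsiL 𝕜 M).continuous.measurable) (hCmeas.inter hBmeas))]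
    rw [lintegral_congr (fun a => by
      rw [hsection1 a, sec_meas hM η _, ← hKdef])]
    exact lintegral_mul_const _ hmint
  have hI2 : ν B = (∫⁻ a : 𝕜, ENNReal.ofReal (Real.sqrt (max 0 (1 - ‖a‖ ^ 2)) ^ K) ∂κ)
      * η {v : Fin M → 𝕜 | ∑ i, ‖v i‖ ^ 2 ≤ 1} := by
    rw [hν_apply _ hBmeas,
      Measure.prod_apply (((PsiL 𝕜 M).continuous.measurable) hBmeas)]
    rw [lintegral_congr (fun a => by
      rw [hsection2 a, sec_meas hM η _, ← hKdef])]
    exact lintegral_mul_const _ hmint2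
  have hcore := core_ineq κ (rclike_finrank_le_two 𝕜) hs0 hs1 hK1
  have hteq : μ D * ν B ≤ ENNReal.ofReal (Real.sqrt (1 - t ^ 2) ^ K) * ν B := by
    calc μ D * ν B = ν (C ∩ B) := by rw [← compute2, compute1]
      _ = _ := hI1
      _ ≤ (ENNReal.ofReal (Real.sqrt (1 - t ^ 2) ^ K) *
          ∫⁻ a : 𝕜, ENNReal.ofReal (Real.sqrt (max 0 (1 - ‖a‖ ^ 2)) ^ K) ∂κ)
          * η {v : Fin M → 𝕜 | ∑ i, ‖v i‖ ^ 2 ≤ 1} := mul_le_mul_left hcore _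
      _ = ENNReal.ofReal (Real.sqrt (1 - t ^ 2) ^ K) * ν B := by rw [mul_assoc, ← hI2]
  have hμD : μ D ≤ ENNReal.ofReal (Real.sqrt (1 - t ^ 2) ^ K) :=
    (ENNReal.mul_le_mul_iff_left hνB0 hνBfin).1 hteq
  have hPeq : ℙ {ω | t ≤ ‖x ω i₀‖} = μ D := by
    rw [hμdef, Measure.map_apply hmeas hDmeas]
    rfl
  rw [hPeq]
  refine hμD.trans (ENNReal.ofReal_le_ofReal ?_)
  have h1 : Real.sqrt (1 - t ^ 2) ≤ Real.exp (-(t ^ 2 / 2)) := by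
    have h2 : 1 - t ^ 2 ≤ Real.exp (-(t ^ 2)) := by
      have := Real.add_one_le_exp (-(t ^ 2))
      linarith
    have h3 : Real.exp (-(t ^ 2)) = Real.exp (-(t ^ 2 / 2)) ^ 2 := by
      rw [← Real.exp_nat_mul]
      congr 1
      push_cast
      ring
    calc Real.sqrt (1 - t ^ 2) ≤ Real.sqrt (Real.exp (-(t ^ 2))) := Real.sqrt_le_sqrt h2
      _ = Real.exp (-(t ^ 2 / 2)) := by rw [h3, Real.sqrt_sq (Real.exp_nonneg _)]
  calc Real.sqrt (1 - t ^ 2) ^ K ≤ Real.exp (-(t ^ 2 / 2)) ^ K :=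
        pow_le_pow_left₀ (Real.sqrt_nonneg _) h1 K
    _ = Real.exp ((K:ℝ) * (-(t ^ 2 / 2))) := (Real.exp_nat_mul _ K).symm
    _ = Real.exp (-(β : ℝ) * (((M+1 : ℕ) : ℝ) - 1) * t ^ 2 / 2) := by
        congr 1
        rw [hKval]
        push_cast
        ring
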